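/- arXiv:1703.07196 — 2 statements merged into one kernel-verified Lean document; each statement's English description precedes it below -/
import Mathlib

section
/- For formal power series in q and Laurent variable y, the Jacobi triple product identity holds: θ₁(q,y) = Σ_{n∈ℤ} (-1)^n q^{(n+1/2)²} y^{n+1/2} equals q^{1/4}(y^{1/2} - y^{-1/2}) ∏_{n≥1} (1-q^{2n})(1-q^{2n}y)(1-q^{2n}y^{-1}). -/
/-!
Jacobi triple product identity, as formal power series in `Q = q^(1/4)` with
coefficients in the Laurent polynomial ring `ℤ[Y^{±1}]`, where `Y = y^(1/2)`.
So `q^((n+1/2)^2) = Q^((2n+1)^2)`, `y^(n+1/2) = Y^(2n+1)`, `q^(2n) = Q^(8n)`.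
The infinite product is encoded coefficientwise: a series `P` is *the* infinite
product `∏_{n≥1} f n` iff for every degree `d` the coefficient of `Q^d` in `P`
agrees with that of the partial product `∏_{n=1}^{d+1} f n` (the tail factors
are `≡ 1` modulo high powers of `Q`, so partial products stabilize).
-/

open PowerSeries LaurentPolynomial

noncomputable section

/-- `θ₁(q,y) = Σ_{n∈ℤ} (-1)^n q^((n+1/2)^2) y^(n+1/2)` as a power series in
`Q = q^(1/4)` over `ℤ[y^{±1/2}]`. -/
def theta1 : PowerSeries (LaurentPolynomial ℤ) :=
  PowerSeries.mk fun k =>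
    ∑ n ∈ Finset.Icc (-(k : ℤ)) (k : ℤ),
      if (2 * n + 1) ^ 2 = (k : ℤ) then ((n.negOnePow : ℤ) : LaurentPolynomial ℤ) * T (2 * n + 1)
      else 0

/-- the `n`-th factor `(1 - q^(2n))(1 - q^(2n) y)(1 - q^(2n) y^{-1})` of the triple
product, with `q^(2n) = Q^(8n)`, `y = Y^2`, `y⁻¹ = Y^(-2)`. -/
def tripleFactor (n : ℕ) : PowerSeries (LaurentPolynomial ℤ) :=
  (1 - (PowerSeries.X : PowerSeries (LaurentPolynomial ℤ)) ^ (8 * (n + 1))) *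
    (1 - PowerSeries.C (R := LaurentPolynomial ℤ) (T 2) * PowerSeries.X ^ (8 * (n + 1))) *
    (1 - PowerSeries.C (R := LaurentPolynomial ℤ) (T (-2)) * PowerSeries.X ^ (8 * (n + 1)))

abbrev JTPps := PowerSeries (LaurentPolynomial ℤ)

/-- `Q = q^2 = X^8`. -/
def JTPQ : JTPps := PowerSeries.X ^ 8

/-- Gaussian binomial `[2N, N+m]_Q` as a power series, via Pascal-type recursion. -/
def JTPCb : ℕ → ℤ → JTPps
  | 0, m => if m = 0 then 1 else 0
  | (N+1), m => (1 + JTPQ ^ (2*N+1)) * JTPCb N m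
      + JTPQ ^ (((N:ℤ)+1-m).toNat) * JTPCb N (m-1)
      + JTPQ ^ (((N:ℤ)+1+m).toNat) * JTPCb N (m+1)

lemma JTPCb_eq_zero : ∀ (N : ℕ) (m : ℤ), N < m.natAbs → JTPCb N m = 0 := by
  intro N
  induction N with
  | zero => intro m hm; simp only [JTPCb]; rw [if_neg]; omega
  | succ N ih =>
    intro m hm
    rw [JTPCb, ih m (by omega), ih (m-1) (by omega), ih (m+1) (by omega)]
    ring

lemma JTPCb_neg : ∀ (N : ℕ) (m : ℤ), JTPCb N (-m) = JTPCb N m := by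
  intro N
  induction N with
  | zero => intro m; simp only [JTPCb, neg_eq_zero]
  | succ N ih =>
    intro m
    rw [JTPCb, JTPCb]
    have h1 : -m - 1 = -(m+1) := by ring
    have h2 : -m + 1 = -(m-1) := by ring
    rw [h1, h2, ih, ih, ih]
    have e1 : ((N:ℤ)+1 - -m).toNat = ((N:ℤ)+1+m).toNat := by omega
    have e2 : ((N:ℤ)+1 + -m).toNat = ((N:ℤ)+1-m).toNat := by omega
    rw [e1, e2]; ring

lemma JTPCb_diag : ∀ (N : ℕ), JTPCb N N = 1 := by
  intro N
  induction N with
  | zero => simp [JTPCb]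
  | succ N ih =>
    have : ((N:ℕ)+1 : ℤ) = (N:ℤ)+1 := by push_cast; ring
    rw [show ((N+1 : ℕ) : ℤ) = (N:ℤ)+1 by push_cast; ring]
    rw [JTPCb]
    rw [JTPCb_eq_zero N ((N:ℤ)+1) (by omega), JTPCb_eq_zero N ((N:ℤ)+1+1) (by omega)]
    have e1 : ((N:ℤ)+1-((N:ℤ)+1)).toNat = 0 := by omega
    rw [show (N:ℤ)+1-1 = (N:ℤ) by ring, e1, ih]
    ring

/-- `(Q;Q)_k = ∏_{j=1}^k (1 - Q^j)`. -/
def JTPF (k : ℕ) : JTPps := ∏ j ∈ Finset.range k, (1 - JTPQ ^ (j+1))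

lemma JTPF_succ (k : ℕ) : JTPF (k+1) = JTPF k * (1 - JTPQ ^ (k+1)) :=
  Finset.prod_range_succ _ _

lemma JTPF_zero : JTPF 0 = 1 := Finset.prod_range_zero _

/-- Key exact identity: `(Q)_{N+m} (Q)_{N-m} [2N, N+m]_Q = (Q)_{2N}`. -/
lemma JTPkey : ∀ (N : ℕ) (m : ℤ), m.natAbs ≤ N →
    JTPF ((N:ℤ)+m).toNat * JTPF ((N:ℤ)-m).toNat * JTPCb N m = JTPF (2*N) := by
  intro N
  induction N with
  | zero =>
    intro m hm
    have : m = 0 := by omega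
    subst this
    simp [JTPCb, JTPF_zero]
  | succ N ih =>
    intro m hm
    by_cases hc : m.natAbs ≤ N
    · -- interior case
      set a' := ((N:ℤ)+m).toNat with ha'
      set b' := ((N:ℤ)-m).toNat with hb'
      have hab : a' + b' = 2*N := by omega
      have ea : (((N:ℕ)+1:ℕ):ℤ) + m = ((a' + 1 : ℕ) : ℤ) := by push_cast; omega
      have eb : (((N:ℕ)+1:ℕ):ℤ) - m = ((b' + 1 : ℕ) : ℤ) := by push_cast; omega
      rw [ea, eb, Int.toNat_natCast, Int.toNat_natCast]
      rw [JTPCb]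
      have e1 : ((N:ℤ)+1-m).toNat = b' + 1 := by omega
      have e2 : ((N:ℤ)+1+m).toNat = a' + 1 := by omega
      rw [e1, e2]
      -- three auxiliary identities
      have h0 : JTPF (a'+1) * JTPF (b'+1) * JTPCb N m
          = (1 - JTPQ^(a'+1)) * (1 - JTPQ^(b'+1)) * JTPF (2*N) := by
        have := ih m hc
        rw [← ha', ← hb'] at this
        rw [JTPF_succ a', JTPF_succ b', ← this]; ring
      have h1 : JTPF (a'+1) * JTPF (b'+1) * JTPCb N (m-1)
          = (1 - JTPQ^(a'+1)) * (1 - JTPQ^(a')) * JTPF (2*N) := by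
        by_cases hm1 : (m-1).natAbs ≤ N
        · obtain ⟨a'', ha2⟩ : ∃ a'', a' = a'' + 1 := ⟨a' - 1, by omega⟩
          have := ih (m-1) hm1
          have ee1 : ((N:ℤ)+(m-1)).toNat = a'' := by omega
          have ee2 : ((N:ℤ)-(m-1)).toNat = b' + 1 := by omega
          rw [ee1, ee2] at this
          rw [ha2, JTPF_succ (a''+1), JTPF_succ a'', ← this]; ring
        · have hz : JTPCb N (m-1) = 0 := JTPCb_eq_zero N (m-1) (by omega)
          have ha0 : a' = 0 := by omega
          rw [hz, ha0]; simp
      have h2 : JTPF (a'+1) * JTPF (b'+1) * JTPCb N (m+1)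
          = (1 - JTPQ^(b'+1)) * (1 - JTPQ^(b')) * JTPF (2*N) := by
        by_cases hm1 : (m+1).natAbs ≤ N
        · obtain ⟨b'', hb2⟩ : ∃ b'', b' = b'' + 1 := ⟨b' - 1, by omega⟩
          have := ih (m+1) hm1
          have ee1 : ((N:ℤ)+(m+1)).toNat = a' + 1 := by omega
          have ee2 : ((N:ℤ)-(m+1)).toNat = b'' := by omega
          rw [ee1, ee2] at this
          rw [hb2, JTPF_succ (b''+1), JTPF_succ b'', ← this]; ring
        · have hz : JTPCb N (m+1) = 0 := JTPCb_eq_zero N (m+1) (by omega)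
          have hb0 : b' = 0 := by omega
          rw [hz, hb0]; simp
      have goalrw : JTPF (a'+1) * JTPF (b'+1) *
          ((1 + JTPQ ^ (2*N+1)) * JTPCb N m + JTPQ ^ (b'+1) * JTPCb N (m-1)
            + JTPQ ^ (a'+1) * JTPCb N (m+1))
          = (JTPF (a'+1) * JTPF (b'+1) * JTPCb N m) * (1 + JTPQ ^ (2*N+1))
            + (JTPF (a'+1) * JTPF (b'+1) * JTPCb N (m-1)) * JTPQ ^ (b'+1)
            + (JTPF (a'+1) * JTPF (b'+1) * JTPCb N (m+1)) * JTPQ ^ (a'+1) := by ring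
      rw [goalrw, h0, h1, h2]
      have eF : JTPF (2*(N+1)) = JTPF (2*N) * (1 - JTPQ^(2*N+1)) * (1 - JTPQ^(2*N+2)) := by
        rw [show 2*(N+1) = (2*N+1)+1 by ring, JTPF_succ, JTPF_succ]
      rw [eF]
      rw [show 2*N+1 = a'+b'+1 by omega, show 2*N+2 = a'+b'+2 by omega]
      ring
    · -- boundary |m| = N+1
      have hmm : m = (N:ℤ)+1 ∨ m = -((N:ℤ)+1) := by omega
      have hdiag : JTPCb (N+1) ((N:ℤ)+1) = 1 := by
        have := JTPCb_diag (N+1)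
        rwa [show (((N:ℕ)+1:ℕ):ℤ) = (N:ℤ)+1 by push_cast; ring] at this
      rcases hmm with h | h
      · subst h
        have e1 : (((N:ℕ)+1:ℕ):ℤ) + ((N:ℤ)+1) = ((2*(N+1) : ℕ) : ℤ) := by push_cast; ring
        have e2 : (((N:ℕ)+1:ℕ):ℤ) - ((N:ℤ)+1) = ((0:ℕ):ℤ) := by push_cast; ring
        rw [e1, e2, Int.toNat_natCast, Int.toNat_natCast, hdiag, JTPF_zero]
        ring
      · subst h
        rw [JTPCb_neg (N+1) ((N:ℤ)+1), hdiag]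
        have e1 : (((N:ℕ)+1:ℕ):ℤ) + (-((N:ℤ)+1)) = ((0:ℕ):ℤ) := by push_cast; ring
        have e2 : (((N:ℕ)+1:ℕ):ℤ) - (-((N:ℤ)+1)) = ((2*(N+1) : ℕ) : ℤ) := by push_cast; ring
        rw [e1, e2, Int.toNat_natCast, Int.toNat_natCast, JTPF_zero]
        ring

/-- partial tail product `∏_{j=k+1}^{k+l} (1 - Q^j)`. -/
def JTPFext (k l : ℕ) : JTPps := ∏ j ∈ Finset.range l, (1 - JTPQ ^ (k+j+1))

lemma JTPF_add (k l : ℕ) : JTPF (k+l) = JTPF k * JTPFext k l := by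
  rw [JTPF, Finset.prod_range_add]; rfl

lemma JTPnear_one_mul {M : ℕ} {f g : JTPps}
    (hf : (PowerSeries.X:JTPps)^M ∣ f - 1) (hg : (PowerSeries.X:JTPps)^M ∣ g - 1) :
    (PowerSeries.X:JTPps)^M ∣ f*g - 1 := by
  have h : f*g - 1 = f*(g-1) + (f-1) := by ring
  rw [h]
  exact dvd_add (Dvd.dvd.mul_left hg f) hf

lemma JTPQ_pow_dvd (M k : ℕ) (h : M ≤ 8*k) : (PowerSeries.X:JTPps)^M ∣ JTPQ ^ k := by
  rw [JTPQ, ← pow_mul]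
  exact pow_dvd_pow _ h

lemma JTPFext_sub_one (k l : ℕ) :
    (PowerSeries.X:JTPps)^(8*(k+1)) ∣ JTPFext k l - 1 := by
  induction l with
  | zero => simp [JTPFext]
  | succ l ih =>
    rw [JTPFext, Finset.prod_range_succ, ← JTPFext]
    refine JTPnear_one_mul ih ?_
    have h : (1 - JTPQ ^ (k+l+1)) - 1 = -(JTPQ ^ (k+l+1)) := by ring
    rw [h, dvd_neg]
    exact JTPQ_pow_dvd _ _ (by omega)

lemma JTPF_isUnit (k : ℕ) : IsUnit (JTPF k) := by
  rw [PowerSeries.isUnit_iff_constantCoeff]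
  have h : (PowerSeries.constantCoeff (R := LaurentPolynomial ℤ)) (JTPF k) = 1 := by
    rw [JTPF, map_prod]
    refine Finset.prod_eq_one fun j _ => ?_
    rw [map_sub, map_one, JTPQ, ← pow_mul, map_pow, PowerSeries.constantCoeff_X,
      zero_pow (by omega), sub_zero]
  rw [h]; exact isUnit_one

lemma JTPdvd_of_unit_mul {u a b : JTPps} (hu : IsUnit u) (h : b ∣ u * a) : b ∣ a := by
  obtain ⟨v, hv⟩ := hu.exists_left_inv
  have : a = v * (u * a) := by rw [← mul_assoc, hv, one_mul]
  rw [this]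
  exact Dvd.dvd.mul_left h v

/-- main congruence: `(Q)_N · [2N,N+m]_Q ≡ 1  mod X^(8(N+1-|m|))`. -/
lemma JTPcong (N : ℕ) (m : ℤ) (hm : m.natAbs ≤ N) :
    (PowerSeries.X:JTPps)^(8*(N+1-m.natAbs)) ∣ JTPF N * JTPCb N m - 1 := by
  set mn := m.natAbs with hmn
  have hCb : JTPCb N m = JTPCb N (mn:ℤ) := by
    rcases Int.natAbs_eq m with h | h
    · rw [← hmn] at h; rw [← h]
    · rw [← hmn] at h; rw [h, JTPCb_neg]
  rw [hCb]
  set c := N - mn with hc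
  have hN : N = c + mn := by omega
  have key := JTPkey N (mn:ℤ) hm
  have e1 : ((N:ℤ)+(mn:ℤ)).toNat = c + 2*mn := by omega
  have e2 : ((N:ℤ)-(mn:ℤ)).toNat = c := by omega
  rw [e1, e2] at key
  have hM : 8*(N+1-mn) = 8*(c+1) := by omega
  rw [hM]
  refine JTPdvd_of_unit_mul (u := JTPF (c+2*mn) * JTPF c)
    ((JTPF_isUnit _).mul (JTPF_isUnit _)) ?_
  have expand : (JTPF (c+2*mn) * JTPF c) * (JTPF N * JTPCb N (mn:ℤ) - 1)
      = JTPF N * (JTPF (c+2*mn) * JTPF c * JTPCb N (mn:ℤ)) - JTPF (c+2*mn) * JTPF c := by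
    ring
  rw [expand, key]
  have eFN : JTPF N = JTPF c * JTPFext c mn := by rw [hN, JTPF_add]
  have eF2N : JTPF (2*N) = JTPF c * JTPFext c (2*mn) * JTPFext (c+2*mn) c := by
    rw [show 2*N = (c+2*mn) + c by omega, JTPF_add, show c+2*mn = c + 2*mn by rfl,
      JTPF_add c (2*mn)]
  have eFNm : JTPF (c+2*mn) = JTPF c * JTPFext c (2*mn) := JTPF_add c (2*mn)
  rw [eFN, eF2N, eFNm]
  have factored : JTPF c * JTPFext c mn * (JTPF c * JTPFext c (2*mn) * JTPFext (c+2*mn) c)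
      - JTPF c * JTPFext c (2*mn) * JTPF c
      = (JTPF c * JTPF c * JTPFext c (2*mn)) * (JTPFext c mn * JTPFext (c+2*mn) c - 1) := by
    ring
  rw [factored]
  refine Dvd.dvd.mul_left ?_ _
  refine JTPnear_one_mul (JTPFext_sub_one c mn) ?_
  exact dvd_trans (pow_dvd_pow _ (by omega)) (JTPFext_sub_one (c+2*mn) c)

def JTPA (k : ℕ) : JTPps :=
  1 - PowerSeries.C (R := LaurentPolynomial ℤ) (T 2) * PowerSeries.X ^ (8*k)

def JTPB (k : ℕ) : JTPps :=
  1 - PowerSeries.C (R := LaurentPolynomial ℤ) (T (-2)) * PowerSeries.X ^ (8*k)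

def JTPe (m : ℤ) : ℕ := (m*(m+1)).toNat

lemma JTPe_cast (m : ℤ) : (JTPe m : ℤ) = m*(m+1) := by
  rw [JTPe, Int.toNat_of_nonneg]
  rcases le_or_gt 0 m with h | h
  · exact mul_nonneg h (by omega)
  · have h2 : m*(m+1) = (-m)*(-(m+1)) := by ring
    rw [h2]; exact mul_nonneg (by omega) (by omega)

def JTPmon (m : ℤ) : JTPps :=
  PowerSeries.C (R := LaurentPolynomial ℤ) (((m.negOnePow : ℤ) : LaurentPolynomial ℤ) * T (2*m)) *
    PowerSeries.X ^ (4 * JTPe m)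

def JTPterm (N : ℕ) (m : ℤ) : JTPps := JTPCb N m * JTPmon m

lemma JTPsum_shift (f : ℤ → JTPps) (a b c : ℤ) :
    ∑ m ∈ Finset.Icc a b, f (m+c) = ∑ m ∈ Finset.Icc (a+c) (b+c), f m := by
  refine Finset.sum_nbij' (fun m => m + c) (fun m => m - c) ?_ ?_ ?_ ?_ ?_ <;>
    intros <;> simp_all [Finset.mem_Icc] <;> omega

lemma JTPsum_to_core (g : ℤ → JTPps) (N : ℕ) (hg : ∀ m : ℤ, N < m.natAbs → g m = 0)
    {a b : ℤ} (ha : a ≤ -(N:ℤ)) (hb : (N:ℤ) ≤ b) :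
    ∑ m ∈ Finset.Icc a b, g m = ∑ m ∈ Finset.Icc (-(N:ℤ)) (N:ℤ), g m := by
  refine (Finset.sum_subset (Finset.Icc_subset_Icc ha hb) fun x hx hnx => ?_).symm
  simp only [Finset.mem_Icc] at hx hnx
  exact hg x (by omega)

lemma JTPL1 : ∀ N : ℕ, ∏ k ∈ Finset.range N, (JTPA (k+1) * JTPB k)
    = ∑ m ∈ Finset.Icc (-(N:ℤ)) (N:ℤ), JTPterm N m := by
  intro N
  induction N with
  | zero =>
    simp only [Finset.range_zero, Finset.prod_empty, Nat.cast_zero, neg_zero,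
      Finset.Icc_self, Finset.sum_singleton]
    simp [JTPterm, JTPmon, JTPCb, JTPe]
  | succ N ih =>
    -- abbreviations
    set g1 : ℤ → JTPps := fun m => (1 + JTPQ^(2*N+1)) * JTPCb N m * JTPmon m with hg1
    set g2 : ℤ → JTPps := fun m => JTPQ^(((N:ℤ)-m).toNat) * JTPCb N m * JTPmon (m+1) with hg2
    set g3 : ℤ → JTPps := fun m => JTPQ^(((N:ℤ)+m).toNat) * JTPCb N m * JTPmon (m-1) with hg3
    have hg1z : ∀ m : ℤ, N < m.natAbs → g1 m = 0 := fun m hm => by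
      rw [hg1]; simp only; rw [JTPCb_eq_zero N m hm, mul_zero, zero_mul]
    have hg2z : ∀ m : ℤ, N < m.natAbs → g2 m = 0 := fun m hm => by
      rw [hg2]; simp only; rw [JTPCb_eq_zero N m hm, mul_zero, zero_mul]
    have hg3z : ∀ m : ℤ, N < m.natAbs → g3 m = 0 := fun m hm => by
      rw [hg3]; simp only; rw [JTPCb_eq_zero N m hm, mul_zero, zero_mul]
    -- decomposition of term (N+1) m
    have hdec : ∀ m : ℤ, JTPterm (N+1) m = g1 m + g2 (m-1) + g3 (m+1) := by
      intro m
      rw [JTPterm, JTPCb, hg1, hg2, hg3]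
      simp only
      rw [show (N:ℤ) - (m-1) = (N:ℤ)+1-m by ring, show (N:ℤ) + (m+1) = (N:ℤ)+1+m by ring,
        show m - 1 + 1 = m by ring, show m + 1 - 1 = m by ring]
      ring
    -- expansion of the new factor
    have hT : (PowerSeries.C (R := LaurentPolynomial ℤ) (T 2)) *
        (PowerSeries.C (R := LaurentPolynomial ℤ) (T (-2))) = (1:JTPps) := by
      rw [← map_mul, ← T_add]
      norm_num [T_zero]
    have hAB : JTPA (N+1) * JTPB N = (1 + JTPQ^(2*N+1))
        - PowerSeries.C (R := LaurentPolynomial ℤ) (T 2) * PowerSeries.X^(8*(N+1))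
        - PowerSeries.C (R := LaurentPolynomial ℤ) (T (-2)) * PowerSeries.X^(8*N) := by
      rw [JTPA, JTPB, JTPQ, ← pow_mul,
        show 8*(2*N+1) = (8*(N+1))+(8*N) by ring, pow_add]
      linear_combination (PowerSeries.X:JTPps)^(8*(N+1)) * (PowerSeries.X:JTPps)^(8*N) * hT
    -- per-term identities on the core range
    have p2 : ∀ m : ℤ, -(N:ℤ) ≤ m → m ≤ N →
        JTPterm N m * (PowerSeries.C (R := LaurentPolynomial ℤ) (T 2) * PowerSeries.X^(8*(N+1)))
          = - g2 m := by
      intro m h1 h2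
      have hxe : 4 * JTPe (m+1) + 8*(((N:ℤ)-m).toNat) = 4 * JTPe m + 8*(N+1) := by
        have c1 := JTPe_cast m
        have c2 : (JTPe (m+1) : ℤ) = (JTPe m : ℤ) + 2*m + 2 := by
          rw [JTPe_cast, JTPe_cast]; ring
        omega
      have hX : (PowerSeries.X:JTPps) ^ (4 * JTPe (m+1)) * PowerSeries.X ^ (8*(((N:ℤ)-m).toNat))
          = PowerSeries.X ^ (4 * JTPe m) * PowerSeries.X ^ (8*(N+1)) := by
        rw [← pow_add, ← pow_add, hxe]
      have hs : (PowerSeries.C (R := LaurentPolynomial ℤ) ((((m+1).negOnePow : ℤ)) : LaurentPolynomial ℤ))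
          = -(PowerSeries.C (R := LaurentPolynomial ℤ) (((m.negOnePow : ℤ)) : LaurentPolynomial ℤ)) := by
        rw [Int.negOnePow_succ]
        push_cast [Units.val_neg]
        rw [map_neg]
      have ht : (PowerSeries.C (R := LaurentPolynomial ℤ) (T (2*(m+1)) : LaurentPolynomial ℤ))
          = PowerSeries.C (R := LaurentPolynomial ℤ) (T (2*m)) * PowerSeries.C (R := LaurentPolynomial ℤ) (T 2) := by
        rw [show (2*(m+1):ℤ) = 2*m+2 by ring, T_add, map_mul]
      simp only [JTPterm, JTPmon, hg2, map_mul, JTPQ, ← pow_mul]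
      rw [hs, ht]
      linear_combination (-(JTPCb N m *
        PowerSeries.C (R := LaurentPolynomial ℤ) (((m.negOnePow : ℤ)) : LaurentPolynomial ℤ) *
        PowerSeries.C (R := LaurentPolynomial ℤ) (T (2*m)) *
        PowerSeries.C (R := LaurentPolynomial ℤ) (T 2))) * hX
    have p3 : ∀ m : ℤ, -(N:ℤ) ≤ m → m ≤ N →
        JTPterm N m * (PowerSeries.C (R := LaurentPolynomial ℤ) (T (-2)) * PowerSeries.X^(8*N))
          = - g3 m := by
      intro m h1 h2
      have hxe : 4 * JTPe (m-1) + 8*(((N:ℤ)+m).toNat) = 4 * JTPe m + 8*N := by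
        have c1 := JTPe_cast m
        have c2 : (JTPe (m-1) : ℤ) = (JTPe m : ℤ) - 2*m := by
          rw [JTPe_cast, JTPe_cast]; ring
        omega
      have hX : (PowerSeries.X:JTPps) ^ (4 * JTPe (m-1)) * PowerSeries.X ^ (8*(((N:ℤ)+m).toNat))
          = PowerSeries.X ^ (4 * JTPe m) * PowerSeries.X ^ (8*N) := by
        rw [← pow_add, ← pow_add, hxe]
      have hs0 : (m-1).negOnePow = -m.negOnePow := by
        have h := Int.negOnePow_succ (m-1)
        rw [sub_add_cancel] at h
        rw [h, neg_neg]
      have hs : (PowerSeries.C (R := LaurentPolynomial ℤ) ((((m-1).negOnePow : ℤ)) : LaurentPolynomial ℤ))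
          = -(PowerSeries.C (R := LaurentPolynomial ℤ) (((m.negOnePow : ℤ)) : LaurentPolynomial ℤ)) := by
        rw [hs0]
        push_cast [Units.val_neg]
        rw [map_neg]
      have ht : (PowerSeries.C (R := LaurentPolynomial ℤ) (T (2*(m-1)) : LaurentPolynomial ℤ))
          = PowerSeries.C (R := LaurentPolynomial ℤ) (T (2*m)) * PowerSeries.C (R := LaurentPolynomial ℤ) (T (-2)) := by
        rw [show (2*(m-1):ℤ) = 2*m+(-2) by ring, T_add, map_mul]
      simp only [JTPterm, JTPmon, hg3, map_mul, JTPQ, ← pow_mul]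
      rw [hs, ht]
      linear_combination (-(JTPCb N m *
        PowerSeries.C (R := LaurentPolynomial ℤ) (((m.negOnePow : ℤ)) : LaurentPolynomial ℤ) *
        PowerSeries.C (R := LaurentPolynomial ℤ) (T (2*m)) *
        PowerSeries.C (R := LaurentPolynomial ℤ) (T (-2)))) * hX
    -- now the sums
    rw [Finset.prod_range_succ, ih, hAB]
    push_cast
    have RHSsum : ∑ m ∈ Finset.Icc (-((N:ℤ)+1)) ((N:ℤ)+1), JTPterm (N+1) m
        = (∑ m ∈ Finset.Icc (-((N:ℤ)+1)) ((N:ℤ)+1), g1 m)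
          + (∑ m ∈ Finset.Icc (-((N:ℤ)+1)) ((N:ℤ)+1), g2 (m-1))
          + (∑ m ∈ Finset.Icc (-((N:ℤ)+1)) ((N:ℤ)+1), g3 (m+1)) := by
      rw [← Finset.sum_add_distrib, ← Finset.sum_add_distrib]
      exact Finset.sum_congr rfl fun m _ => hdec m
    have s2 : (∑ m ∈ Finset.Icc (-((N:ℤ)+1)) ((N:ℤ)+1), g2 (m-1))
        = ∑ m ∈ Finset.Icc (-(N:ℤ)) (N:ℤ), g2 m := by
      rw [show (∑ m ∈ Finset.Icc (-((N:ℤ)+1)) ((N:ℤ)+1), g2 (m-1))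
          = ∑ m ∈ Finset.Icc (-((N:ℤ)+1)) ((N:ℤ)+1), g2 (m + (-1)) by
            exact Finset.sum_congr rfl fun m _ => by rw [sub_eq_add_neg],
        JTPsum_shift g2 _ _ (-1)]
      exact JTPsum_to_core g2 N hg2z (by omega) (by omega)
    have s3 : (∑ m ∈ Finset.Icc (-((N:ℤ)+1)) ((N:ℤ)+1), g3 (m+1))
        = ∑ m ∈ Finset.Icc (-(N:ℤ)) (N:ℤ), g3 m := by
      rw [JTPsum_shift g3 _ _ 1]
      exact JTPsum_to_core g3 N hg3z (by omega) (by omega)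
    have s1 : (∑ m ∈ Finset.Icc (-((N:ℤ)+1)) ((N:ℤ)+1), g1 m)
        = ∑ m ∈ Finset.Icc (-(N:ℤ)) (N:ℤ), g1 m :=
      JTPsum_to_core g1 N hg1z (by omega) (by omega)
    rw [RHSsum, s1, s2, s3, Finset.sum_mul]
    rw [← Finset.sum_add_distrib, ← Finset.sum_add_distrib]
    refine Finset.sum_congr rfl fun m hm => ?_
    simp only [Finset.mem_Icc] at hm
    have e2 := p2 m hm.1 hm.2
    have e3 := p3 m hm.1 hm.2
    have e1 : JTPterm N m * (1 + JTPQ^(2*N+1)) = g1 m := by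
      simp only [JTPterm, JTPmon, hg1]; ring
    calc JTPterm N m * ((1 + JTPQ^(2*N+1))
          - PowerSeries.C (R := LaurentPolynomial ℤ) (T 2) * PowerSeries.X^(8*(N+1))
          - PowerSeries.C (R := LaurentPolynomial ℤ) (T (-2)) * PowerSeries.X^(8*N))
        = JTPterm N m * (1 + JTPQ^(2*N+1))
          - JTPterm N m * (PowerSeries.C (R := LaurentPolynomial ℤ) (T 2) * PowerSeries.X^(8*(N+1)))
          - JTPterm N m * (PowerSeries.C (R := LaurentPolynomial ℤ) (T (-2)) * PowerSeries.X^(8*N)) := by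
          ring
      _ = g1 m + g2 m + g3 m := by rw [e1, e2, e3]; ring

lemma JTPabs_le (m : ℤ) : 8 * m.natAbs ≤ 4 * JTPe m + 8 := by
  have c := JTPe_cast m
  zify
  rcases le_or_gt 0 m with h | h
  · rw [abs_of_nonneg h, c]
    nlinarith [sq_nonneg (m-1)]
  · rcases eq_or_lt_of_le (by omega : m ≤ -1) with h2 | h2
    · subst h2; norm_num [JTPe]
    · rw [abs_of_neg h, c]
      nlinarith [mul_nonneg (by omega : (0:ℤ) ≤ -(m+1)) (by omega : (0:ℤ) ≤ -(m+2))]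

lemma JTPcoeff_term (e : ℕ) (m : ℤ) (hm : m.natAbs ≤ e+1) :
    PowerSeries.coeff (R := LaurentPolynomial ℤ) e (JTPF (e+1) * JTPterm (e+1) m)
      = if e = 4*(JTPe m) then ((m.negOnePow : ℤ) : LaurentPolynomial ℤ) * T (2*m) else 0 := by
  have harr : JTPF (e+1) * JTPterm (e+1) m
      = PowerSeries.C (R := LaurentPolynomial ℤ) (((m.negOnePow:ℤ):LaurentPolynomial ℤ) * T (2*m)) *
        (PowerSeries.X^(4*JTPe m) * (JTPF (e+1) * JTPCb (e+1) m)) := by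
    rw [JTPterm, JTPmon]; ring
  rw [harr, PowerSeries.coeff_C_mul, PowerSeries.coeff_X_pow_mul']
  by_cases hle : 4*JTPe m ≤ e
  · rw [if_pos hle]
    have habs := JTPabs_le m
    have hlt : e - 4*JTPe m < 8*((e+1)+1 - m.natAbs) := by omega
    have hcong := JTPcong (e+1) m hm
    rw [PowerSeries.X_pow_dvd_iff] at hcong
    have hz := hcong (e - 4*JTPe m) hlt
    rw [map_sub, sub_eq_zero] at hz
    rw [hz, PowerSeries.coeff_one]
    split_ifs with h1 h2 h3
    · rw [mul_one]
    · omega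
    · omega
    · rw [mul_zero]
  · rw [if_neg hle, mul_zero, if_neg (by omega)]

lemma JTPtrip (N : ℕ) : ∏ n ∈ Finset.range N, tripleFactor n
    = JTPF N * ∏ k ∈ Finset.range N, (JTPA (k+1) * JTPB (k+1)) := by
  rw [JTPF, ← Finset.prod_mul_distrib]
  refine Finset.prod_congr rfl fun n _ => ?_
  rw [tripleFactor, JTPA, JTPB, JTPQ, ← pow_mul]
  ring

lemma JTPBshift (N : ℕ) : JTPB N * ∏ k ∈ Finset.range N, (JTPA (k+1) * JTPB k)
    = JTPB 0 * ∏ k ∈ Finset.range N, (JTPA (k+1) * JTPB (k+1)) := by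
  rw [Finset.prod_mul_distrib, Finset.prod_mul_distrib]
  have h1 : JTPB N * ∏ k ∈ Finset.range N, JTPB k
      = JTPB 0 * ∏ k ∈ Finset.range N, JTPB (k+1) := by
    rw [show JTPB N * ∏ k ∈ Finset.range N, JTPB k
        = ∏ k ∈ Finset.range (N+1), JTPB k by rw [Finset.prod_range_succ]; ring,
      Finset.prod_range_succ']
    ring
  linear_combination (∏ k ∈ Finset.range N, JTPA (k+1)) * h1

/-- **Jacobi triple product**:
`θ₁(q,y) = q^(1/4) (y^(1/2) - y^(-1/2)) ∏_{n≥1} (1-q^(2n))(1-q^(2n)y)(1-q^(2n)y^{-1})`. -/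
theorem jacobi_triple_product (P : PowerSeries (LaurentPolynomial ℤ))
    (hP : ∀ d : ℕ, PowerSeries.coeff (R := LaurentPolynomial ℤ) d P =
      PowerSeries.coeff (R := LaurentPolynomial ℤ) d (∏ n ∈ Finset.range (d + 1), tripleFactor n)) :
    theta1 = PowerSeries.X *
      (PowerSeries.C (R := LaurentPolynomial ℤ) (T 1 - T (-1))) * P := by
  refine PowerSeries.ext fun d => ?_
  cases d with
  | zero =>
    rw [theta1, PowerSeries.coeff_mk]
    rw [mul_assoc, PowerSeries.coeff_zero_eq_constantCoeff, map_mul,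
      PowerSeries.constantCoeff_X, zero_mul]
    norm_num
  | succ e =>
    rw [mul_assoc, PowerSeries.coeff_succ_X_mul, PowerSeries.coeff_C_mul, hP e]
    set N := e + 1 with hN
    set PP : PowerSeries (LaurentPolynomial ℤ) := ∏ n ∈ Finset.range N, tripleFactor n with hPP
    -- step A: factor T1
    have hTT : (T 1 : LaurentPolynomial ℤ) * T (-2) = T (-1) := by
      rw [← T_add]; norm_num
    have hB0 : JTPB 0 = PowerSeries.C (R := LaurentPolynomial ℤ) (1 - T (-2)) := by
      rw [JTPB, map_sub, map_one]
      norm_num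
    -- product chain
    have hchain : JTPB 0 * PP = JTPF N * (JTPB N * ∏ k ∈ Finset.range N, (JTPA (k+1) * JTPB k)) := by
      rw [hPP, JTPtrip N, JTPBshift N]; ring
    have hchain2 : JTPB 0 * PP = JTPF N * (JTPB N *
        ∑ m ∈ Finset.Icc (-(N:ℤ)) (N:ℤ), JTPterm N m) := by
      rw [hchain, JTPL1 N]
    -- kill the B N factor at coefficient e
    have hkill : PowerSeries.coeff (R := LaurentPolynomial ℤ) e (JTPB 0 * PP)
        = PowerSeries.coeff (R := LaurentPolynomial ℤ) e
            (JTPF N * ∑ m ∈ Finset.Icc (-(N:ℤ)) (N:ℤ), JTPterm N m) := by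
      rw [hchain2]
      have hsplit : JTPF N * (JTPB N * ∑ m ∈ Finset.Icc (-(N:ℤ)) (N:ℤ), JTPterm N m)
          = (JTPF N * ∑ m ∈ Finset.Icc (-(N:ℤ)) (N:ℤ), JTPterm N m)
            - PowerSeries.C (R := LaurentPolynomial ℤ) (T (-2)) *
              (PowerSeries.X ^ (8*N) * (JTPF N * ∑ m ∈ Finset.Icc (-(N:ℤ)) (N:ℤ), JTPterm N m)) := by
        rw [JTPB]; ring
      rw [hsplit, map_sub, PowerSeries.coeff_C_mul, PowerSeries.coeff_X_pow_mul',
        if_neg (by omega), mul_zero, sub_zero]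
    -- expand the sum
    have hsum : PowerSeries.coeff (R := LaurentPolynomial ℤ) e
        (JTPF N * ∑ m ∈ Finset.Icc (-(N:ℤ)) (N:ℤ), JTPterm N m)
        = ∑ m ∈ Finset.Icc (-(N:ℤ)) (N:ℤ),
            (if e = 4*(JTPe m) then ((m.negOnePow : ℤ) : LaurentPolynomial ℤ) * T (2*m) else 0) := by
      rw [Finset.mul_sum, map_sum]
      refine Finset.sum_congr rfl fun m hmm => ?_
      simp only [Finset.mem_Icc] at hmm
      exact JTPcoeff_term e m (by omega)
    -- B0 coefficient
    have hB0c : PowerSeries.coeff (R := LaurentPolynomial ℤ) e (JTPB 0 * PP)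
        = (1 - T (-2)) * PowerSeries.coeff (R := LaurentPolynomial ℤ) e PP := by
      rw [hB0, PowerSeries.coeff_C_mul]
    have hfactor : (T 1 - T (-1) : LaurentPolynomial ℤ) = T 1 * (1 - T (-2)) := by
      rw [mul_sub, mul_one, hTT]
    rw [theta1, PowerSeries.coeff_mk, hfactor, mul_assoc, ← hB0c, hkill, hsum,
      Finset.mul_sum]
    refine Finset.sum_congr ?_ fun n hn => ?_
    · rw [hN]
    rw [mul_ite, mul_zero]
    have c := JTPe_cast n
    have hsq : (2*n+1)^2 = 4*(n*(n+1)) + 1 := by ring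
    refine if_congr ?_ ?_ rfl
    · rw [hsq, ← c]
      constructor <;> intro h <;> omega
    · rw [show (2*n+1:ℤ) = 2*n + 1 from rfl, T_add]
      ring

end
end

section
/- With notation as in the previous context, for two T-invariant 0-dimensional subschemes W, Z of the chart U = Spec ℂ[x,y] and a T-equivariant divisor a acting by a character of weight a_σ on U, the K-theory class of R Hom(𝒪_W, 𝒪_Z(a)) in K₀^T(pt) equals χ(a_σ) · conj(W) · Z · (1 - χ(v))(1 - χ(w)) / (χ(v)χ(w)), where conj denotes the involution of K₀^T(pt) = ℤ[t₁^{±}, t₂^{±}] sending χ(m) ↦ χ(-m), and W, Z denote the classes [𝒪_W], [𝒪_Z]. -/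
/-!
Purely algebraic form of the localization computation: in the (localized)
representation ring `K₀^T(pt)`, modelled by a field `K` containing the
characters `t₁ = χ(v)`, `t₂ = χ(w)`, `χa = χ(a_σ)`, with the involution `conj`
sending `χ(m) ↦ χ(-m)` (so `conj t₁ = t₁⁻¹`, `conj t₂ = t₂⁻¹`), the classes
`W = (1-P_W)/((1-t₁)(1-t₂))`, `Z = (1-P_Z)/((1-t₁)(1-t₂))` of `𝒪_W`, `𝒪_Z`,
and `RHom(I_W, I_Z(a)) = χa·conj(P_W)·P_Z/((1-t₁)(1-t₂))` satisfy:
`RHom(𝒪_W, 𝒪_Z(a)) = H⁰(𝒪_Z(a)) + RHom(𝒪_W,𝒪(a)) - (Γ(𝒪(a)) - RHom(I_W,I_Z(a)))`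
` = χa·Z + χa·conj(W)/(t₁t₂) - (χa/((1-t₁)(1-t₂)) - RHom(I_W,I_Z(a)))`
equals `χa · conj(W) · Z · (1-t₁)(1-t₂)/(t₁t₂)`.
-/

theorem RHom_OW_OZ {K : Type*} [Field K] (t₁ t₂ χa PW PZ : K)
    (ht₁ : t₁ ≠ 0) (ht₂ : t₂ ≠ 0) (h1 : 1 - t₁ ≠ 0) (h2 : 1 - t₂ ≠ 0)
    (conj : K →+* K) (hct₁ : conj t₁ = t₁⁻¹) (hct₂ : conj t₂ = t₂⁻¹)
    (W Z RHomII : K)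
    (hW : W = (1 - PW) / ((1 - t₁) * (1 - t₂)))
    (hZ : Z = (1 - PZ) / ((1 - t₁) * (1 - t₂)))
    (hR : RHomII = χa * conj PW * PZ / ((1 - t₁) * (1 - t₂))) :
    χa * Z + χa * conj W / (t₁ * t₂) - (χa / ((1 - t₁) * (1 - t₂)) - RHomII)
      = χa * conj W * Z * ((1 - t₁) * (1 - t₂)) / (t₁ * t₂) := by
  have hD : (1 - t₁) * (1 - t₂) ≠ 0 := mul_ne_zero h1 h2
  have hT : t₁ * t₂ ≠ 0 := mul_ne_zero ht₁ ht₂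
  have h1' : t₁ - 1 ≠ 0 := fun h => h1 (by linear_combination -h)
  have h2' : t₂ - 1 ≠ 0 := fun h => h2 (by linear_combination -h)
  have hcW : conj W = t₁ * t₂ * (1 - conj PW) / ((1 - t₁) * (1 - t₂)) := by
    rw [hW, map_div₀, map_mul, map_sub, map_sub, map_sub, map_one, hct₁, hct₂]
    rw [div_eq_div_iff (by
      have e1 : (1:K) - t₁⁻¹ = (t₁ - 1) / t₁ := by field_simp
      have e2 : (1:K) - t₂⁻¹ = (t₂ - 1) / t₂ := by field_simp
      rw [e1, e2]
      exact mul_ne_zero (div_ne_zero h1' ht₁) (div_ne_zero h2' ht₂)) hD]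
    have e1 : (1:K) - t₁⁻¹ = (t₁ - 1) / t₁ := by field_simp
    have e2 : (1:K) - t₂⁻¹ = (t₂ - 1) / t₂ := by field_simp
    rw [e1, e2]
    field_simp
    ring
  have hA : χa * Z = χa * (1 - PZ) / ((1 - t₁) * (1 - t₂)) := by
    rw [hZ, mul_div_assoc]
  have hB : χa * conj W / (t₁ * t₂)
      = χa * (1 - conj PW) / ((1 - t₁) * (1 - t₂)) := by
    rw [hcW]
    field_simp
  have hC : χa / ((1 - t₁) * (1 - t₂)) - RHomII
      = (χa - χa * conj PW * PZ) / ((1 - t₁) * (1 - t₂)) := by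
    rw [hR, sub_div]
  have hRHS : χa * conj W * Z * ((1 - t₁) * (1 - t₂)) / (t₁ * t₂)
      = (χa * (1 - conj PW) * (1 - PZ)) / ((1 - t₁) * (1 - t₂)) := by
    rw [hcW, hZ]
    field_simp
  rw [hA, hB, hC, hRHS, ← add_div, ← sub_div]
  congr 1
  ring
end
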